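/- For the complete graph K_n and any integer k with 3 ≤ k ≤ n, the pendant-tree k-edge-connectivity satisfies μ_k(K_n) = n − k. -/

import Mathlib

open SimpleGraph

/-- A pendant `S`-Steiner tree in `G`: a subgraph `T` of `G` that is a tree,
contains `S`, and in which every vertex of `S` has degree 1. -/
def IsPendantSTree {V : Type*} (G : SimpleGraph V) (S : Set V) (T : G.Subgraph) : Prop :=
  S ⊆ T.verts ∧ T.coe.IsTree ∧ ∀ v ∈ S, (T.neighborSet v).ncard = 1

/-- A family of pairwise internally disjoint pendant `S`-Steiner trees. -/
def IsIntDisjointFamily {V : Type*} (G : SimpleGraph V) (S : Set V)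
    (F : Finset G.Subgraph) : Prop :=
  (∀ T ∈ F, IsPendantSTree G S T) ∧
  ∀ T ∈ F, ∀ T' ∈ F, T ≠ T' →
    T.edgeSet ∩ T'.edgeSet = ∅ ∧ T.verts ∩ T'.verts = S

/-- A family of pairwise edge-disjoint pendant `S`-Steiner trees. -/
def IsEdgeDisjointFamily {V : Type*} (G : SimpleGraph V) (S : Set V)
    (F : Finset G.Subgraph) : Prop :=
  (∀ T ∈ F, IsPendantSTree G S T) ∧
  ∀ T ∈ F, ∀ T' ∈ F, T ≠ T' → T.edgeSet ∩ T'.edgeSet = ∅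

/-- `τ(S)`: the maximum number of pairwise internally disjoint pendant `S`-Steiner trees. -/
noncomputable def tauLocal {V : Type*} (G : SimpleGraph V) (S : Set V) : ℕ :=
  sSup {n | ∃ F : Finset G.Subgraph, F.card = n ∧ IsIntDisjointFamily G S F}

/-- Pendant-tree `k`-connectivity `τ_k(G)`. -/
noncomputable def tau {V : Type*} (G : SimpleGraph V) (k : ℕ) : ℕ :=
  sInf {n | ∃ S : Finset V, S.card = k ∧ tauLocal G ↑S = n}

/-- `μ(S)`: the maximum number of pairwise edge-disjoint pendant `S`-Steiner trees. -/
noncomputable def muLocal {V : Type*} (G : SimpleGraph V) (S : Set V) : ℕ :=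
  sSup {n | ∃ F : Finset G.Subgraph, F.card = n ∧ IsEdgeDisjointFamily G S F}

/-- Pendant-tree `k`-edge-connectivity `μ_k(G)`. -/
noncomputable def mu {V : Type*} (G : SimpleGraph V) (k : ℕ) : ℕ :=
  sInf {n | ∃ S : Finset V, S.card = k ∧ muLocal G ↑S = n}

/-- Vertex connectivity (cut version): the least size of a vertex set whose removal
disconnects the graph or leaves at most one vertex. -/
noncomputable def kappa {V : Type*} [Fintype V] (G : SimpleGraph V) : ℕ :=
  sInf {n | ∃ S : Finset V, S.card = n ∧
    (¬ ((⊤ : G.Subgraph).deleteVerts ↑S).coe.Connected ∨ Fintype.card V - S.card ≤ 1)}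

/-- Edge connectivity: the least size of an edge set whose removal disconnects the graph. -/
noncomputable def edgeConn {V : Type*} (G : SimpleGraph V) : ℕ :=
  sInf {n | ∃ F : Finset (Sym2 V), F.card = n ∧ ↑F ⊆ G.edgeSet ∧
    ¬ (G.deleteEdges ↑F).Connected}

/-- Edges of `G` with one endpoint in `S` and the other outside `S`. -/
def crossEdges {V : Type*} (G : SimpleGraph V) (S : Set V) : Set (Sym2 V) :=
  {e | e ∈ G.edgeSet ∧ ∃ u v, e = s(u, v) ∧ u ∈ S ∧ v ∉ S}

lemma walk_closed {V : Type*} {G : SimpleGraph V} (C : Set V)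
    (hC : ∀ a b, a ∈ C → G.Adj a b → b ∈ C) {a b : V} (p : G.Walk a b)
    (ha : a ∈ C) : b ∈ C := by
  induction p with
  | nil => exact ha
  | cons h q ih => exact ih (hC _ _ ha h)

lemma star_acyclic {V : Type*} {G : SimpleGraph V} (c : V)
    (h : ∀ a b, G.Adj a b → a = c ∨ b = c) : G.IsAcyclic := by
  classical
  intro u p hp
  obtain ⟨x, hx, hxc⟩ : ∃ x ∈ p.support, x ≠ c := by
    cases p with
    | nil => exact absurd hp (by simp)
    | @cons _ y _ hadj q =>
      by_cases huc : u = c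
      · exact ⟨y, by simp [SimpleGraph.Walk.support_cons],
          fun hyc => by subst hyc huc; exact G.loopless.irrefl _ hadj⟩
      · exact ⟨u, by simp [SimpleGraph.Walk.support_cons], huc⟩
  have hp' := hp.rotate hx
  generalize hq : p.rotate x hx = p' at hp'
  cases p' with
  | nil => simp at hp'
  | @cons _ y _ hadj q =>
    have hyc : y = c := (h _ _ hadj).resolve_left hxc
    subst hyc
    have hmem : s(x, y) ∈ q.edges := by
      have : s(x, y) ∈ q.reverse.edges := by
        cases hqr : q.reverse with
        | nil => exact absurd rfl hxc
        | @cons _ z _ hadj2 r =>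
          have hzc : z = y := (h _ _ hadj2).resolve_left hxc
          subst hzc
          simp [SimpleGraph.Walk.edges_cons]
      simpa [SimpleGraph.Walk.edges_reverse] using this
    have hnodup := hp'.edges_nodup
    rw [SimpleGraph.Walk.edges_cons] at hnodup
    exact (List.nodup_cons.mp hnodup).1 hmem

/-- The star subgraph of the complete graph: center `v`, leaves `S`. -/
def starSub {V : Type*} (S : Set V) (v : V) : (⊤ : SimpleGraph V).Subgraph where
  verts := insert v S
  Adj a b := (a = v ∧ b ∈ S ∧ b ≠ v) ∨ (b = v ∧ a ∈ S ∧ a ≠ v)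
  adj_sub := by
    rintro a b (⟨rfl, _, hb⟩ | ⟨rfl, _, ha⟩)
    · exact fun h => hb h.symm
    · exact ha
  edge_vert := by
    rintro a b (⟨rfl, _⟩ | ⟨_, ha, _⟩)
    · exact Set.mem_insert _ _
    · exact Set.mem_insert_of_mem _ ha
  symm := by constructor; rintro a b (h | h) <;> [right; left] <;> exact h

lemma starSub_pendant {V : Type*} (S : Set V) (v : V) (hv : v ∉ S) :
    IsPendantSTree (⊤ : SimpleGraph V) S (starSub S v) := by
  refine ⟨fun s hs => Set.mem_insert_of_mem _ hs, ⟨?_, ?_⟩, ?_⟩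
  · -- connected
    have hvm : v ∈ (starSub S v).verts := Set.mem_insert _ _
    have key : ∀ x : (starSub S v).verts, (starSub S v).coe.Reachable x ⟨v, hvm⟩ := by
      rintro ⟨x, hx | hx⟩
      · subst hx; rfl
      · have hadj : (starSub S v).Adj x v := Or.inr ⟨rfl, hx, fun h => hv (h ▸ hx)⟩
        exact SimpleGraph.Adj.reachable ((SimpleGraph.Subgraph.coe_adj _ _ _).mpr hadj)
    have : Nonempty (starSub S v).verts := ⟨⟨v, hvm⟩⟩
    exact ⟨fun a b => (key a).trans (key b).symm⟩
  · -- acyclic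
    refine star_acyclic (⟨v, Set.mem_insert _ _⟩ : (starSub S v).verts) ?_
    rintro ⟨a, ha⟩ ⟨b, hb⟩ hadj
    simp only [SimpleGraph.Subgraph.coe_adj, starSub] at hadj
    rcases hadj with ⟨rfl, _⟩ | ⟨rfl, _⟩
    · left; rfl
    · right; rfl
  · -- pendant
    intro s hs
    have : (starSub S v).neighborSet s = {v} := by
      ext w
      simp only [SimpleGraph.Subgraph.mem_neighborSet, starSub, Set.mem_singleton_iff]
      constructor
      · rintro (⟨rfl, _⟩ | ⟨rfl, _⟩)
        · exact absurd hs hv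
        · rfl
      · rintro rfl
        exact Or.inr ⟨rfl, hs, fun h => hv (h ▸ hs)⟩
    rw [this, Set.ncard_singleton]
lemma starSub_adj {V : Type*} (S : Set V) (v a b : V) :
    (starSub S v).Adj a b ↔ (a = v ∧ b ∈ S ∧ b ≠ v) ∨ (b = v ∧ a ∈ S ∧ a ≠ v) :=
  Iff.rfl

lemma starSub_injOn {V : Type*} (S : Set V) {v w : V} (hv : v ∉ S) (hw : w ∉ S)
    (h : starSub S v = starSub S w) : v = w := by
  have hverts : (starSub S v).verts = (starSub S w).verts := by rw [h]
  have : v ∈ insert w S := by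
    rw [show insert w S = (starSub S w).verts from rfl, ← hverts]
    exact Set.mem_insert _ _
  rcases this with h' | h'
  · exact h'
  · exact absurd h' hv

lemma muLocal_top (n k : ℕ) (hk : 3 ≤ k) (S : Finset (Fin n)) (hS : S.card = k)
    (hkn : k ≤ n) : muLocal (⊤ : SimpleGraph (Fin n)) ↑S = n - k := by
  classical
  have hpos : 0 < n := lt_of_lt_of_le (by omega) hkn
  -- the bound
  have hbound : ∀ m ∈ {m | ∃ F : Finset (⊤ : SimpleGraph (Fin n)).Subgraph,
      F.card = m ∧ IsEdgeDisjointFamily (⊤ : SimpleGraph (Fin n)) ↑S F}, m ≤ n - k := by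
    rintro m ⟨F, rfl, hfam, hdisj⟩
    obtain ⟨s, hs⟩ : S.Nonempty := Finset.card_pos.mp (by omega)
    have key : ∀ T : (⊤ : SimpleGraph (Fin n)).Subgraph, T ∈ F →
        ∃ v : Fin n, T.neighborSet s = {v} ∧ v ∉ S := by
      intro T hT
      obtain ⟨hsub, htree, hpend⟩ := hfam T hT
      obtain ⟨v, hv⟩ := Set.ncard_eq_one.mp (hpend s (by exact_mod_cast hs))
      refine ⟨v, hv, ?_⟩
      intro hvS
      have hAdjsv : T.Adj s v := by
        have : v ∈ T.neighborSet s := hv ▸ Set.mem_singleton v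
        exact this
      have hnbrv : T.neighborSet v = {s} := by
        obtain ⟨a, ha⟩ := Set.ncard_eq_one.mp (hpend v (by exact_mod_cast hvS))
        have : (s : Fin n) ∈ T.neighborSet v := hAdjsv.symm
        rw [ha] at this
        rw [ha, this]
      -- pick u ∈ S distinct from s and v
      have hcard : (S \ {s, v}).Nonempty := by
        rw [← Finset.card_pos]
        have h1 : S.card - ({s, v} : Finset (Fin n)).card ≤ (S \ {s, v}).card :=
          Finset.le_card_sdiff _ _
        have h2 : ({s, v} : Finset (Fin n)).card ≤ 2 :=
          (Finset.card_insert_le _ _).trans (by simp)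
        omega
      obtain ⟨u, hu⟩ := hcard
      rw [Finset.mem_sdiff, Finset.mem_insert, Finset.mem_singleton] at hu
      obtain ⟨huS, hune⟩ := hu
      push_neg at hune
      have hsu : (s : Fin n) ∈ T.verts := hsub (by exact_mod_cast hs)
      have huv : (u : Fin n) ∈ T.verts := hsub (by exact_mod_cast huS)
      obtain ⟨p⟩ := htree.isConnected.preconnected ⟨s, hsu⟩ ⟨u, huv⟩
      have := walk_closed (G := T.coe) {x | (x : Fin n) = s ∨ (x : Fin n) = v}
        (by
          rintro a b (ha | ha) hadj
          · right
            have hb : (b : Fin n) ∈ T.neighborSet s := by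
              rw [← ha]; exact (SimpleGraph.Subgraph.coe_adj _ _ _).mp hadj
            rw [hv] at hb; exact hb
          · left
            have hb : (b : Fin n) ∈ T.neighborSet v := by
              rw [← ha]; exact (SimpleGraph.Subgraph.coe_adj _ _ _).mp hadj
            rw [hnbrv] at hb; exact hb) p (Or.inl rfl)
      rcases this with h' | h'
      · exact hune.1 h'
      · exact hune.2 h'
    -- choose the neighbor function
    have key' : ∀ T : (⊤ : SimpleGraph (Fin n)).Subgraph,
        ∃ v : Fin n, T ∈ F → (T.neighborSet s = {v} ∧ v ∉ S) := by
      intro T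
      by_cases hT : T ∈ F
      · obtain ⟨v, hv⟩ := key T hT
        exact ⟨v, fun _ => hv⟩
      · exact ⟨⟨0, hpos⟩, fun h => absurd h hT⟩
    choose f hf using key'
    have hcard : F.card ≤ (Finset.univ \ S).card := by
      apply Finset.card_le_card_of_injOn f
      · intro T hT
        rw [Finset.mem_coe, Finset.mem_sdiff]
        exact ⟨Finset.mem_univ _, ((hf T) hT).2⟩
      · intro T hT T' hT' hff
        by_contra hne
        have h1 := (hf T hT).1
        have h2 := (hf T' hT').1
        have e1 : T.Adj s (f T) := by
          have : f T ∈ T.neighborSet s := h1 ▸ Set.mem_singleton _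
          exact this
        have e2 : T'.Adj s (f T) := by
          have : f T ∈ T'.neighborSet s := by rw [h2, ← hff]; exact Set.mem_singleton _
          exact this
        have := hdisj T hT T' hT' hne
        have hmem : s(↑s, f T) ∈ T.edgeSet ∩ T'.edgeSet := ⟨e1, e2⟩
        rw [this] at hmem
        exact hmem
    rwa [Finset.card_sdiff_of_subset (Finset.subset_univ _), Finset.card_univ,
      Fintype.card_fin, hS] at hcard
  -- the construction
  have hmem : (n - k) ∈ {m | ∃ F : Finset (⊤ : SimpleGraph (Fin n)).Subgraph,
      F.card = m ∧ IsEdgeDisjointFamily (⊤ : SimpleGraph (Fin n)) ↑S F} := by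
    refine ⟨(Finset.univ \ S).image (fun v => starSub (↑S) v), ?_, ?_, ?_⟩
    · rw [Finset.card_image_of_injOn, Finset.card_sdiff_of_subset (Finset.subset_univ _),
        Finset.card_univ, Fintype.card_fin, hS]
      intro v hv w hw h
      rw [Finset.mem_coe, Finset.mem_sdiff] at hv hw
      exact starSub_injOn _ (by simpa using hv.2) (by simpa using hw.2) h
    · intro T hT
      obtain ⟨v, hv, rfl⟩ := Finset.mem_image.mp hT
      rw [Finset.mem_sdiff] at hv
      exact starSub_pendant _ _ (by simpa using hv.2)
    · intro T hT T' hT' hne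
      obtain ⟨v, hv, rfl⟩ := Finset.mem_image.mp hT
      obtain ⟨w, hw, rfl⟩ := Finset.mem_image.mp hT'
      rw [Finset.mem_sdiff] at hv hw
      have hvS : v ∉ (S : Set (Fin n)) := by simpa using hv.2
      have hwS : w ∉ (S : Set (Fin n)) := by simpa using hw.2
      have hvw : v ≠ w := fun h => hne (by rw [h])
      ext e
      simp only [Set.mem_inter_iff, Set.mem_empty_iff_false, iff_false]
      induction e with
      | _ a b =>
        rintro ⟨h1, h2⟩
        rw [SimpleGraph.Subgraph.mem_edgeSet] at h1 h2
        rw [starSub_adj] at h1 h2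
        rcases h1 with ⟨rfl, hb, -⟩ | ⟨rfl, ha, -⟩ <;>
          rcases h2 with ⟨hq, hb2, -⟩ | ⟨hq, ha2, -⟩
        · exact hvw hq
        · exact hvS ha2
        · exact hvS hb2
        · exact hvw hq
  -- conclude
  unfold muLocal
  exact le_antisymm (csSup_le ⟨_, hmem⟩ hbound) (le_csSup ⟨n - k, hbound⟩ hmem)

/-- μ_k(K_n) = n - k for 3 ≤ k ≤ n. -/
theorem mu_completeGraph (n k : ℕ) (hk : 3 ≤ k) (hkn : k ≤ n) :
    mu (⊤ : SimpleGraph (Fin n)) k = n - k := by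
  classical
  have hset : {m | ∃ S : Finset (Fin n), S.card = k ∧
      muLocal (⊤ : SimpleGraph (Fin n)) ↑S = m} = {n - k} := by
    ext m
    simp only [Set.mem_setOf_eq, Set.mem_singleton_iff]
    constructor
    · rintro ⟨S, hS, rfl⟩
      exact muLocal_top n k hk S hS hkn
    · rintro rfl
      obtain ⟨S, -, hS⟩ := Finset.exists_subset_card_eq (s := (Finset.univ : Finset (Fin n))) (n := k)
        (by simp [hkn])
      exact ⟨S, hS, muLocal_top n k hk S hS hkn⟩
  unfold mu
  rw [hset]
  exact csInf_singleton _
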